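/- For all z, w ∈ ℂ the series ∑_{m=0}^∞ ψ^s_m(z) · conj(ψ^s_m(w)) converges and equals the reproducing kernel K^s(z,w) = ((1 − s²)/(2πs)) · exp(−α(z² + conj(w)²) + ν z conj(w)). -/

import Mathlib

open MeasureTheory Complex

/-- Physicists' Hermite polynomial `H_m`, as an entire function on `ℂ`:
`H_m(z) = (-1)^m e^{z²} (d/dz)^m e^{-z²}`. -/
noncomputable def Hpoly (m : ℕ) (z : ℂ) : ℂ :=
  (-1 : ℂ) ^ m * Complex.exp (z ^ 2) * iteratedDeriv m (fun w => Complex.exp (-w ^ 2)) z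

/-- `ψ^s_m(z) = ((1-s)/(π√s))^{1/2} ((1-s)/(1+s))^{m/2} (2^m m!)^{-1/2} e^{-z²/2} H_m(z)`. -/
noncomputable def psiS (s : ℝ) (m : ℕ) (z : ℂ) : ℂ :=
  (Real.sqrt ((1 - s) / (Real.pi * Real.sqrt s)) : ℂ)
    * (Real.sqrt (((1 - s) / (1 + s)) ^ m) : ℂ)
    * (1 / (Real.sqrt ((2 : ℝ) ^ m * m.factorial) : ℂ))
    * Complex.exp (-z ^ 2 / 2) * Hpoly m z

/-- Reproducing kernel `K^s(z,w) = ((1-s²)/(2πs)) exp(-α(z² + conj w²) + ν z conj w)`. -/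
noncomputable def Kker (s : ℝ) (z w : ℂ) : ℂ :=
  (((1 - s ^ 2) / (2 * Real.pi * s) : ℝ) : ℂ) *
    Complex.exp (-(((1 + s ^ 2) / (4 * s) : ℝ) : ℂ) * (z ^ 2 + (starRingEnd ℂ w) ^ 2)
      + (((1 - s ^ 2) / (2 * s) : ℝ) : ℂ) * z * starRingEnd ℂ w)

section Mehler
open Polynomial Filter

noncomputable def HP : ℕ → Polynomial ℂ
  | 0 => 1
  | n + 1 => Polynomial.C 2 * Polynomial.X * HP n - (HP n).derivative

lemma hasDerivAt_gauss (z : ℂ) :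
    HasDerivAt (fun w : ℂ => Complex.exp (-w ^ 2)) (-2 * z * Complex.exp (-z ^ 2)) z := by
  have h1 : HasDerivAt (fun w : ℂ => -w ^ 2) (-(2 * z)) z := by
    simpa using ((hasDerivAt_pow 2 z).fun_neg)
  simpa [mul_comm, mul_assoc, mul_left_comm] using h1.cexp

lemma iteratedDeriv_gauss (m : ℕ) (z : ℂ) :
    iteratedDeriv m (fun w => Complex.exp (-w ^ 2)) z
      = (-1 : ℂ) ^ m * Complex.exp (-z ^ 2) * (HP m).eval z := by
  induction m generalizing z with
  | zero => simp [HP]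
  | succ n ih =>
    rw [iteratedDeriv_succ]
    have : deriv (iteratedDeriv n fun w => Complex.exp (-w ^ 2)) z
        = deriv (fun z => (-1 : ℂ) ^ n * Complex.exp (-z ^ 2) * (HP n).eval z) z := by
      apply Filter.EventuallyEq.deriv_eq
      filter_upwards with x using ih x
    rw [this]
    have hd : HasDerivAt (fun z : ℂ => (-1 : ℂ) ^ n * Complex.exp (-z ^ 2) * (HP n).eval z)
        ((-1 : ℂ) ^ n * ((-2 * z * Complex.exp (-z ^ 2)) * (HP n).eval z
          + Complex.exp (-z ^ 2) * ((HP n).derivative.eval z))) z := by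
      have h2 : HasDerivAt (fun z : ℂ => (HP n).eval z) ((HP n).derivative.eval z) z :=
        (HP n).hasDerivAt z
      simpa [mul_assoc, mul_add] using (((hasDerivAt_gauss z).mul h2).const_mul ((-1 : ℂ) ^ n))
    rw [hd.deriv, HP]
    simp only [eval_sub, eval_mul, eval_C, eval_X]
    ring

lemma Hpoly_eval (m : ℕ) (z : ℂ) : Hpoly m z = (HP m).eval z := by
  rw [Hpoly, iteratedDeriv_gauss]
  rw [show (-1 : ℂ) ^ m * Complex.exp (z ^ 2) * ((-1 : ℂ) ^ m * Complex.exp (-z ^ 2) * (HP m).eval z)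
    = ((-1 : ℂ) ^ m * (-1 : ℂ) ^ m) * (Complex.exp (z ^ 2) * Complex.exp (-z ^ 2)) * (HP m).eval z by ring]
  rw [← mul_pow, ← Complex.exp_add]
  simp

lemma HP_derivative (n : ℕ) : (HP (n + 1)).derivative = Polynomial.C (2 * (n + 1) : ℂ) * HP n := by
  induction n with
  | zero =>
    have h0 : HP 0 = 1 := rfl
    show (Polynomial.C 2 * Polynomial.X * HP 0 - (HP 0).derivative).derivative = _
    rw [h0]
    simp
  | succ n ih =>
    have h1 : HP (n+2) = Polynomial.C 2 * Polynomial.X * HP (n+1) - (HP (n+1)).derivative := rfl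
    have h2 : HP (n+1) = Polynomial.C 2 * Polynomial.X * HP n - (HP n).derivative := rfl
    rw [h1, derivative_sub, derivative_mul, derivative_mul, ih, derivative_C_mul,
      derivative_C, derivative_X]
    rw [h2]
    push_cast
    rw [show (Polynomial.C (2 * ((n:ℂ) + 1 + 1))) = Polynomial.C (2*((n:ℂ)+1)) + Polynomial.C 2 by
      rw [← Polynomial.C_add]; ring_nf]
    ring

lemma HP_eval_rec (n : ℕ) (z : ℂ) :
    (HP (n + 2)).eval z = 2 * z * (HP (n + 1)).eval z - 2 * (n + 1) * (HP n).eval z := by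
  rw [show HP (n + 2) = Polynomial.C 2 * Polynomial.X * HP (n + 1) - (HP (n + 1)).derivative from rfl]
  rw [HP_derivative]
  simp only [eval_sub, eval_mul, eval_C, eval_X]

lemma HP_map_conj (m : ℕ) : (HP m).map (starRingEnd ℂ) = HP m := by
  induction m with
  | zero => simp [HP]
  | succ n ih =>
    rw [show HP (n + 1) = Polynomial.C 2 * Polynomial.X * HP n - (HP n).derivative from rfl]
    rw [Polynomial.map_sub, Polynomial.map_mul, Polynomial.map_mul, ← derivative_map, ih]
    simp only [map_C, map_X, map_ofNat, Polynomial.map_ofNat]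

lemma Hpoly_conj (m : ℕ) (w : ℂ) :
    (starRingEnd ℂ) (Hpoly m w) = Hpoly m ((starRingEnd ℂ) w) := by
  rw [Hpoly_eval, Hpoly_eval, ← Polynomial.eval₂_hom, ← Polynomial.eval_map, HP_map_conj]

lemma hasSum_gen (y r : ℂ) :
    HasSum (fun m : ℕ => Hpoly m y * r ^ m / (m.factorial : ℂ))
      (Complex.exp (2 * y * r - r ^ 2)) := by
  have hf : Differentiable ℂ (fun w : ℂ => Complex.exp (-w ^ 2)) :=
    fun z => (hasDerivAt_gauss z).differentiableAt
  have h2 := (Complex.hasSum_taylorSeries_of_entire hf y (y - r)).mul_left (Complex.exp (y^2))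
  have h3 : ∀ n : ℕ, Complex.exp (y^2) * ((n.factorial : ℂ)⁻¹ • (y - r - y) ^ n •
      iteratedDeriv n (fun w => Complex.exp (-w ^ 2)) y) = Hpoly n y * r ^ n / (n.factorial : ℂ) := by
    intro n
    rw [iteratedDeriv_gauss, ← Hpoly_eval, smul_eq_mul, smul_eq_mul,
      show y - r - y = -r by ring, neg_pow]
    have hm : ((-1:ℂ)^n) * ((-1:ℂ)^n) = 1 := by rw [← mul_pow]; simp
    calc Complex.exp (y^2) * ((n.factorial : ℂ)⁻¹ * ((-1:ℂ)^n * r^n * ((-1:ℂ)^n *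
          Complex.exp (-y^2) * Hpoly n y)))
        = (((-1:ℂ)^n) * ((-1:ℂ)^n)) * (Complex.exp (y^2) * Complex.exp (-y^2)) *
          (Hpoly n y * r^n * (n.factorial : ℂ)⁻¹) := by ring
      _ = Hpoly n y * r ^ n / (n.factorial : ℂ) := by
          rw [hm, ← Complex.exp_add]
          simp [div_eq_mul_inv]
  have h4 : Complex.exp (y^2) * Complex.exp (-(y - r)^2) = Complex.exp (2*y*r - r^2) := by
    rw [← Complex.exp_add]; congr 1; ring
  rw [funext h3, h4] at h2
  exact h2


/-- key elementary bound -/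
lemma pow_le_fact_exp (m : ℕ) {x : ℝ} (hx : 0 ≤ x) : x ^ m ≤ m.factorial * Real.exp x := by
  have h1 : x ^ m / m.factorial ≤ Real.exp x := by
    have h2 := Real.sum_le_exp_of_nonneg hx (m + 1)
    refine le_trans ?_ h2
    refine Finset.single_le_sum (f := fun i => x ^ i / i.factorial) ?_ (Finset.self_mem_range_succ m)
    intro i _
    positivity
  have hm : (0:ℝ) < m.factorial := by positivity
  calc x ^ m = (x ^ m / m.factorial) * m.factorial := by field_simp
    _ ≤ Real.exp x * m.factorial := by
        apply mul_le_mul_of_nonneg_right h1 hm.le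
    _ = m.factorial * Real.exp x := by ring

lemma real_bound (m : ℕ) {A : ℝ} (hA : 0 ≤ A) (u : ℝ) :
    (A + |u|) ^ m * Real.exp (-u ^ 2)
      ≤ (m.factorial * Real.exp (A + 1/2)) * Real.exp (-(1/2) * u ^ 2) := by
  have h1 : (A + |u|) ^ m ≤ m.factorial * Real.exp (A + |u|) :=
    pow_le_fact_exp m (by positivity)
  have h2 : (A + |u|) ^ m * Real.exp (-u ^ 2)
      ≤ (m.factorial * Real.exp (A + |u|)) * Real.exp (-u ^ 2) := by
    apply mul_le_mul_of_nonneg_right h1 (Real.exp_nonneg _)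
  refine h2.trans ?_
  rw [mul_assoc, mul_assoc, ← Real.exp_add, ← Real.exp_add]
  have h3 : A + |u| + -u ^ 2 ≤ A + 1/2 + -(1/2) * u ^ 2 := by
    nlinarith [sq_nonneg (|u| - 1), _root_.sq_abs u]
  exact mul_le_mul_of_nonneg_left (Real.exp_le_exp.mpr h3) (by positivity)

lemma integrable_aux {A : ℝ} (hA : 0 ≤ A) (m : ℕ) :
    Integrable (fun u : ℝ => (A + |u|) ^ m * Real.exp (-u ^ 2)) := by
  apply Integrable.mono'
    (((integrable_exp_neg_mul_sq (by norm_num : (0:ℝ) < 1/2)).const_mul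
      (m.factorial * Real.exp (A + 1/2))))
  · apply Continuous.aestronglyMeasurable
    continuity
  · filter_upwards with u
    rw [Real.norm_of_nonneg (by positivity)]
    exact real_bound m hA u

lemma norm_f_le (m : ℕ) (z : ℂ) (u : ℝ) :
    ‖(z + u * I) ^ m * Complex.exp (-(u:ℂ) ^ 2)‖ ≤ (‖z‖ + |u|) ^ m * Real.exp (-u ^ 2) := by
  rw [norm_mul, norm_pow]
  have h1 : ‖Complex.exp (-(u:ℂ) ^ 2)‖ = Real.exp (-u ^ 2) := by
    rw [Complex.norm_exp]
    congr 1
    push_cast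
    simp [← Complex.ofReal_pow]
  rw [h1]
  apply mul_le_mul_of_nonneg_right _ (Real.exp_nonneg _)
  apply pow_le_pow_left₀ (norm_nonneg _)
  calc ‖z + u * I‖ ≤ ‖z‖ + ‖(u:ℂ) * I‖ := norm_add_le _ _
    _ = ‖z‖ + |u| := by simp

lemma integrable_f (m : ℕ) (z : ℂ) :
    Integrable (fun u : ℝ => (z + u * I) ^ m * Complex.exp (-(u:ℂ) ^ 2)) := by
  apply Integrable.mono' (integrable_aux (norm_nonneg z) m)
  · apply Continuous.aestronglyMeasurable
    continuity
  · filter_upwards with u using norm_f_le m z u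

lemma tendsto_f_atTop (m : ℕ) (z : ℂ) (l : Filter ℝ)
    (hl : Tendsto (fun u : ℝ => u ^ 2) l atTop) :
    Tendsto (fun u : ℝ => (z + u * I) ^ m * Complex.exp (-(u:ℂ) ^ 2)) l (nhds 0) := by
  apply squeeze_zero_norm (fun u => (norm_f_le m z u).trans (real_bound m (norm_nonneg z) u))
  rw [show (0:ℝ) = (m.factorial * Real.exp (‖z‖ + 1/2)) * 0 by ring]
  apply Tendsto.const_mul
  apply Real.tendsto_exp_atBot.comp
  exact Tendsto.const_mul_atTop_of_neg (by norm_num) hl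

noncomputable def Jg (m : ℕ) (z : ℂ) : ℂ := ∫ u : ℝ, (z + u * I) ^ m * Complex.exp (-(u:ℂ) ^ 2)

lemma integral_deriv_zero {g g' : ℝ → ℂ} (hderiv : ∀ x, HasDerivAt g (g' x) x)
    (hg' : Integrable g') (ht : Tendsto g atTop (nhds 0)) (hb : Tendsto g atBot (nhds 0)) :
    ∫ x : ℝ, g' x = 0 := by
  have h1 : Tendsto (fun R : ℝ => ∫ x in (-R)..R, g' x) atTop (nhds (∫ x : ℝ, g' x)) :=
    intervalIntegral_tendsto_integral hg' tendsto_neg_atTop_atBot tendsto_id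
  have h2 : ∀ R : ℝ, ∫ x in (-R)..R, g' x = g R - g (-R) := fun R =>
    intervalIntegral.integral_eq_sub_of_hasDerivAt (fun x _ => hderiv x)
      hg'.intervalIntegrable
  rw [funext h2] at h1
  have h3 : Tendsto (fun R : ℝ => g R - g (-R)) atTop (nhds 0) := by
    simpa using ht.sub (hb.comp tendsto_neg_atTop_atBot)
  exact tendsto_nhds_unique h1 h3

lemma hasDerivAt_f (n : ℕ) (z : ℂ) (u : ℝ) :
    HasDerivAt (fun u : ℝ => (z + u * I) ^ n * Complex.exp (-(u:ℂ) ^ 2))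
      (((n:ℂ) * (z + u * I) ^ (n - 1) * I + (z + u * I) ^ n * (-2 * u)) *
        Complex.exp (-(u:ℂ) ^ 2)) u := by
  have hgauss : HasDerivAt (fun w : ℂ => Complex.exp (-w ^ 2))
      (-2 * (u:ℂ) * Complex.exp (-(u:ℂ) ^ 2)) (u:ℂ) := by
    have h1 : HasDerivAt (fun w : ℂ => -w ^ 2) (-(2 * (u:ℂ))) (u:ℂ) := by
      simpa using ((hasDerivAt_pow 2 (u:ℂ)).fun_neg)
    simpa [mul_comm, mul_assoc, mul_left_comm] using h1.cexp
  have hlin : HasDerivAt (fun w : ℂ => z + w * I) I (u:ℂ) :=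
    (hasDerivAt_mul_const I).const_add z
  have hpow : HasDerivAt (fun w : ℂ => (z + w * I) ^ n)
      ((n:ℂ) * (z + u * I) ^ (n - 1) * I) (u:ℂ) := hlin.pow n
  have := (hpow.fun_mul hgauss).comp_ofReal
  convert this using 1
  ring

lemma Jg_zero (z : ℂ) : Jg 0 z = Real.sqrt Real.pi := by
  rw [Jg]
  have h1 : ∀ u : ℝ, (z + u * I) ^ 0 * Complex.exp (-(u:ℂ) ^ 2)
      = ((Real.exp (-u ^ 2) : ℝ) : ℂ) := by
    intro u
    rw [pow_zero, one_mul, show -(u:ℂ)^2 = ((-u^2 : ℝ) : ℂ) by push_cast; ring,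
      Complex.ofReal_exp]
  have hr : ∫ x : ℝ, Real.exp (-x ^ 2) = Real.sqrt Real.pi := by
    rw [show (fun x : ℝ => Real.exp (-x^2)) = fun x : ℝ => Real.exp (-1 * x^2) by
      funext x; ring_nf]
    rw [integral_gaussian, div_one]
  rw [funext h1, ← hr]
  exact integral_ofReal

lemma sq_tendsto_atBot : Tendsto (fun u : ℝ => u ^ 2) atBot atTop := by
  have h2 := (tendsto_pow_atTop (n := 2) two_ne_zero).comp
    (tendsto_neg_atBot_atTop : Tendsto (fun x : ℝ => -x) atBot atTop)
  simpa [Function.comp_def, neg_pow] using h2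

lemma integrable_u_exp : Integrable (fun u : ℝ => (u:ℂ) * Complex.exp (-(u:ℂ) ^ 2)) := by
  have h := (integrable_f 1 (0:ℂ)).const_mul (-I)
  have he : (fun u : ℝ => -I * ((0 + (u:ℂ) * I) ^ 1 * Complex.exp (-(u:ℂ) ^ 2)))
      = fun u : ℝ => (u:ℂ) * Complex.exp (-(u:ℂ) ^ 2) := by
    funext u
    rw [pow_one, zero_add]
    linear_combination (-(u:ℂ) * Complex.exp (-(u:ℂ)^2)) * Complex.I_sq
  rw [he] at h
  exact h

lemma int_u_exp (z : ℂ) : ∫ u : ℝ, (u : ℂ) * Complex.exp (-(u:ℂ) ^ 2) = 0 := by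
  have hderiv : ∀ u : ℝ, HasDerivAt (fun u : ℝ => (z + u * I) ^ 0 * Complex.exp (-(u:ℂ) ^ 2))
      ((-2 : ℂ) * ((u:ℂ) * Complex.exp (-(u:ℂ) ^ 2))) u := by
    intro u
    have := hasDerivAt_f 0 z u
    convert this using 1
    simp
    ring
  have hint : Integrable (fun u : ℝ => (-2 : ℂ) * ((u:ℂ) * Complex.exp (-(u:ℂ) ^ 2))) :=
    integrable_u_exp.const_mul _
  have h0 := integral_deriv_zero hderiv hint
    (tendsto_f_atTop 0 z atTop (tendsto_pow_atTop two_ne_zero))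
    (tendsto_f_atTop 0 z atBot sq_tendsto_atBot)
  rw [integral_const_mul] at h0
  rcases mul_eq_zero.mp h0 with h | h
  · norm_num at h
  · exact h

lemma Jg_one (z : ℂ) : Jg 1 z = z * Jg 0 z := by
  rw [Jg, Jg]
  have h1 : ∀ u : ℝ, (z + u * I) ^ 1 * Complex.exp (-(u:ℂ) ^ 2)
      = z * ((z + u*I) ^ 0 * Complex.exp (-(u:ℂ) ^ 2)) + I * ((u:ℂ) * Complex.exp (-(u:ℂ) ^ 2)) := by
    intro u; ring
  rw [funext h1, integral_add ((integrable_f 0 z).const_mul z)]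
  · rw [integral_const_mul, integral_const_mul, int_u_exp z]
    ring
  · exact integrable_u_exp.const_mul _

lemma Jg_def_eq (m : ℕ) (z : ℂ) : Jg m z = ∫ u : ℝ, (z + u * I) ^ m * Complex.exp (-(u:ℂ) ^ 2) := rfl


lemma Jg_rec (m : ℕ) (z : ℂ) :
    2 * Jg (m+2) z = 2 * z * Jg (m+1) z - ((m:ℂ)+1) * Jg m z := by
  -- derivative of (z+uI)^(m+1) e^{-u²}
  have hderiv : ∀ u : ℝ,
      HasDerivAt (fun u : ℝ => (z + u * I) ^ (m+1) * Complex.exp (-(u:ℂ) ^ 2))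
        (I * (((m:ℂ)+1) * ((z + u * I) ^ m * Complex.exp (-(u:ℂ) ^ 2)))
          + (2*I) * ((z + u * I) ^ (m+2) * Complex.exp (-(u:ℂ) ^ 2))
          + (-2*I*z) * ((z + u * I) ^ (m+1) * Complex.exp (-(u:ℂ) ^ 2))) u := by
    intro u
    have h := hasDerivAt_f (m+1) z u
    convert h using 1
    have hs : (m + 1 : ℕ) - 1 = m := rfl
    rw [hs]
    push_cast
    rw [show (z + u * I) ^ (m+2) = (z + u * I) ^ (m+1) * (z + u*I) by ring]
    linear_combination (2 * (u:ℂ) * (z + u * I) ^ (m+1) * Complex.exp (-(u:ℂ)^2)) * Complex.I_sq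
  have hint : Integrable (fun u : ℝ =>
      I * (((m:ℂ)+1) * ((z + u * I) ^ m * Complex.exp (-(u:ℂ) ^ 2)))
        + (2*I) * ((z + u * I) ^ (m+2) * Complex.exp (-(u:ℂ) ^ 2))
        + (-2*I*z) * ((z + u * I) ^ (m+1) * Complex.exp (-(u:ℂ) ^ 2))) := by
    exact (((integrable_f m z).const_mul _).const_mul _ |>.add
      ((integrable_f (m+2) z).const_mul _)).add ((integrable_f (m+1) z).const_mul _)
  have h0 := integral_deriv_zero hderiv hint
    (tendsto_f_atTop (m+1) z atTop (tendsto_pow_atTop two_ne_zero))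
    (tendsto_f_atTop (m+1) z atBot sq_tendsto_atBot)
  rw [integral_add, integral_add] at h0
  · rw [integral_const_mul, integral_const_mul, integral_const_mul, integral_const_mul,
      ← Jg_def_eq, ← Jg_def_eq, ← Jg_def_eq] at h0
    have hI : I * (((m:ℂ)+1) * Jg m z) + 2*I * Jg (m+2) z + -2*I*z * Jg (m+1) z = 0 := by
      linear_combination h0
    have h2 : I * (((m:ℂ)+1) * Jg m z + 2 * Jg (m+2) z + -2*z * Jg (m+1) z) = 0 := by
      linear_combination hI
    rcases mul_eq_zero.mp h2 with h | h
    · exact absurd h I_ne_zero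
    · linear_combination h
  · exact ((integrable_f m z).const_mul _).const_mul _
  · exact (integrable_f (m+2) z).const_mul _
  · exact (((integrable_f m z).const_mul _).const_mul _).add ((integrable_f (m+2) z).const_mul _)
  · exact (integrable_f (m+1) z).const_mul _


lemma sqrtpi_Hpoly (m : ℕ) (z : ℂ) :
    (Real.sqrt Real.pi : ℂ) * Hpoly m z = 2 ^ m * Jg m z := by
  have key : ∀ n : ℕ, ((Real.sqrt Real.pi : ℂ) * Hpoly n z = 2 ^ n * Jg n z) ∧
      ((Real.sqrt Real.pi : ℂ) * Hpoly (n+1) z = 2 ^ (n+1) * Jg (n+1) z) := by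
    intro n
    induction n with
    | zero =>
      constructor
      · rw [Hpoly_eval, Jg_zero, show HP 0 = 1 from rfl]
        simp
      · rw [Hpoly_eval, Jg_one, Jg_zero,
          show HP 1 = Polynomial.C 2 * Polynomial.X * HP 0 - (HP 0).derivative from rfl,
          show HP 0 = 1 from rfl]
        simp
        ring
    | succ n ih =>
      refine ⟨ih.2, ?_⟩
      have hrec := Jg_rec n z
      have hH : Hpoly (n+2) z = 2 * z * Hpoly (n+1) z - 2 * ((n:ℂ)+1) * Hpoly n z := by
        rw [Hpoly_eval, Hpoly_eval, Hpoly_eval, HP_eval_rec]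
      rw [hH]
      have e1 := ih.1
      have e2 := ih.2
      calc (Real.sqrt Real.pi : ℂ) * (2 * z * Hpoly (n+1) z - 2 * ((n:ℂ)+1) * Hpoly n z)
          = 2 * z * ((Real.sqrt Real.pi : ℂ) * Hpoly (n+1) z)
            - 2 * ((n:ℂ)+1) * ((Real.sqrt Real.pi : ℂ) * Hpoly n z) := by ring
        _ = 2 * z * (2 ^ (n+1) * Jg (n+1) z) - 2 * ((n:ℂ)+1) * (2 ^ n * Jg n z) := by
            rw [e1, e2]
        _ = 2 ^ (n+1) * (2 * z * Jg (n+1) z - ((n:ℂ)+1) * Jg n z) := by ring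
        _ = 2 ^ (n+1) * (2 * Jg (n+2) z) := by rw [hrec]
        _ = 2 ^ (n+2) * Jg (n+2) z := by ring
  exact (key m).1


lemma integrable_exp_abs (c : ℝ) {b : ℝ} (hb : 0 < b) :
    Integrable (fun x : ℝ => Real.exp (c * |x| - b * x ^ 2)) := by
  apply Integrable.mono'
    ((integrable_exp_neg_mul_sq (half_pos hb)).const_mul (Real.exp (c^2 / (2*b))))
  · apply Continuous.aestronglyMeasurable; continuity
  · filter_upwards with x
    rw [Real.norm_of_nonneg (Real.exp_nonneg _), ← Real.exp_add]
    apply Real.exp_le_exp.mpr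
    have h2b : (0:ℝ) < 2*b := by linarith
    have h1 : c*|x| ≤ (c^2 + b^2*x^2)/(2*b) := by
      rw [le_div_iff₀ h2b]
      nlinarith [sq_nonneg (b*|x| - c), _root_.sq_abs x]
    have h2 : (c^2 + b^2*x^2)/(2*b) = c^2/(2*b) + (b/2)*x^2 := by
      field_simp
    nlinarith [h1, h2]

lemma summable_bound {t : ℝ} (ht0 : 0 ≤ t) (ht1 : t < 1) {A B : ℝ} (hA : 0 ≤ A) (hB : 0 ≤ B) :
    Summable (fun m : ℕ => (2*t)^m / m.factorial *
      ((∫ u : ℝ, (A+|u|)^m * Real.exp (-u^2)) * (∫ v : ℝ, (B+|v|)^m * Real.exp (-v^2)))) := by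
  set Cv : ℝ := ∫ v : ℝ, Real.exp (2*t*A*|v| - (1-t)*v^2) with hCv
  set Cu : ℝ := ∫ u : ℝ, Real.exp (2*t*B*|u| - (1-t)*u^2) with hCu
  have hiv : Integrable (fun v : ℝ => Real.exp (2*t*A*|v| - (1-t)*v^2)) :=
    integrable_exp_abs _ (by linarith)
  have hiu : Integrable (fun u : ℝ => Real.exp (2*t*B*|u| - (1-t)*u^2)) :=
    integrable_exp_abs _ (by linarith)
  apply summable_of_sum_range_le (c := Real.exp (2*t*A*B) * Cu * Cv)
  · intro m
    have h1 : 0 ≤ ∫ u : ℝ, (A+|u|)^m * Real.exp (-u^2) :=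
      integral_nonneg (fun u => by positivity)
    have h2 : 0 ≤ ∫ v : ℝ, (B+|v|)^m * Real.exp (-v^2) :=
      integral_nonneg (fun v => by positivity)
    positivity
  intro n
  -- pointwise inner sum bound, for fixed u
  have inner_bound : ∀ u : ℝ,
      ∑ m ∈ Finset.range n, (2*t)^m / m.factorial * ((A+|u|)^m * Real.exp (-u^2)) *
        (∫ v : ℝ, (B+|v|)^m * Real.exp (-v^2))
      ≤ Real.exp (2*t*A*B) * Real.exp (2*t*B*|u| - (1-t)*u^2) * Cv := by
    intro u
    have step1 : ∀ m ∈ Finset.range n,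
        (2*t)^m / m.factorial * ((A+|u|)^m * Real.exp (-u^2)) *
          (∫ v : ℝ, (B+|v|)^m * Real.exp (-v^2))
        = ∫ v : ℝ, (2*t)^m / m.factorial * ((A+|u|)^m * Real.exp (-u^2)) *
            ((B+|v|)^m * Real.exp (-v^2)) := by
      intro m _
      rw [integral_const_mul]
    rw [Finset.sum_congr rfl step1, ← integral_finset_sum]
    swap
    · intro m _
      exact (integrable_aux hB m).const_mul _
    have mono : (fun v : ℝ => ∑ m ∈ Finset.range n, (2*t)^m / m.factorial *
          ((A+|u|)^m * Real.exp (-u^2)) * ((B+|v|)^m * Real.exp (-v^2)))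
        ≤ fun v : ℝ => Real.exp (2*t*A*B) * Real.exp (2*t*B*|u| - (1-t)*u^2) *
          Real.exp (2*t*A*|v| - (1-t)*v^2) := by
      intro v
      have hx : (0:ℝ) ≤ 2*t*((A+|u|)*(B+|v|)) := by positivity
      have hsum := Real.sum_le_exp_of_nonneg hx n
      calc ∑ m ∈ Finset.range n, (2*t)^m / m.factorial *
              ((A+|u|)^m * Real.exp (-u^2)) * ((B+|v|)^m * Real.exp (-v^2))
          = (∑ m ∈ Finset.range n, (2*t*((A+|u|)*(B+|v|)))^m / m.factorial) *
              (Real.exp (-u^2) * Real.exp (-v^2)) := by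
            rw [Finset.sum_mul]
            apply Finset.sum_congr rfl
            intro m _
            rw [show (2*t*((A+|u|)*(B+|v|)))^m = (2*t)^m * ((A+|u|)^m * (B+|v|)^m) by
              rw [mul_pow, mul_pow (A+|u|) (B+|v|) m]]
            ring
        _ ≤ Real.exp (2*t*((A+|u|)*(B+|v|))) * (Real.exp (-u^2) * Real.exp (-v^2)) := by
            apply mul_le_mul_of_nonneg_right hsum (by positivity)
        _ = Real.exp (2*t*((A+|u|)*(B+|v|)) + (-u^2 + -v^2)) := by
            rw [← Real.exp_add, ← Real.exp_add]
        _ ≤ Real.exp ((2*t*A*B) + (2*t*B*|u| - (1-t)*u^2) + (2*t*A*|v| - (1-t)*v^2)) := by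
            apply Real.exp_le_exp.mpr
            nlinarith [sq_nonneg (|u| - |v|), _root_.sq_abs u, _root_.sq_abs v,
              abs_nonneg u, abs_nonneg v, mul_nonneg (abs_nonneg u) (abs_nonneg v)]
        _ = Real.exp (2*t*A*B) * Real.exp (2*t*B*|u| - (1-t)*u^2) *
              Real.exp (2*t*A*|v| - (1-t)*v^2) := by
            rw [← Real.exp_add, ← Real.exp_add]
    calc (∫ v : ℝ, ∑ m ∈ Finset.range n, (2*t)^m / m.factorial *
            ((A+|u|)^m * Real.exp (-u^2)) * ((B+|v|)^m * Real.exp (-v^2)))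
        ≤ ∫ v : ℝ, Real.exp (2*t*A*B) * Real.exp (2*t*B*|u| - (1-t)*u^2) *
            Real.exp (2*t*A*|v| - (1-t)*v^2) := by
          apply integral_mono _ _ mono
          · apply integrable_finset_sum
            intro m _
            exact ((integrable_aux hB m).const_mul _)
          · exact hiv.const_mul _
      _ = Real.exp (2*t*A*B) * Real.exp (2*t*B*|u| - (1-t)*u^2) * Cv := by
          rw [integral_const_mul]
  -- outer step
  have outer : ∀ m ∈ Finset.range n, (2*t)^m / m.factorial *
      ((∫ u : ℝ, (A+|u|)^m * Real.exp (-u^2)) * (∫ v : ℝ, (B+|v|)^m * Real.exp (-v^2)))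
      = ∫ u : ℝ, (2*t)^m / m.factorial * ((A+|u|)^m * Real.exp (-u^2)) *
          (∫ v : ℝ, (B+|v|)^m * Real.exp (-v^2)) := by
    intro m _
    rw [integral_mul_const, integral_const_mul]
    ring
  rw [Finset.sum_congr rfl outer, ← integral_finset_sum]
  swap
  · intro m _
    exact ((integrable_aux hA m).const_mul _).mul_const _
  calc (∫ u : ℝ, ∑ m ∈ Finset.range n, (2*t)^m / m.factorial *
          ((A+|u|)^m * Real.exp (-u^2)) * (∫ v : ℝ, (B+|v|)^m * Real.exp (-v^2)))
      ≤ ∫ u : ℝ, Real.exp (2*t*A*B) * Real.exp (2*t*B*|u| - (1-t)*u^2) * Cv := by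
        apply integral_mono _ _ inner_bound
        · apply integrable_finset_sum
          intro m _
          exact ((integrable_aux hA m).const_mul _).mul_const _
        · exact (hiu.const_mul _).mul_const _
    _ = Real.exp (2*t*A*B) * Cu * Cv := by
        rw [show (fun u : ℝ => Real.exp (2*t*A*B) * Real.exp (2*t*B*|u| - (1-t)*u^2) * Cv)
          = fun u : ℝ => (Real.exp (2*t*A*B) * Cv) * Real.exp (2*t*B*|u| - (1-t)*u^2) by
            funext u; ring]
        rw [integral_const_mul]
        ring


lemma mehler {t : ℝ} (ht0 : 0 < t) (ht1 : t < 1) (z y : ℂ) :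
    HasSum (fun m : ℕ => (t:ℂ)^m / (2^m * (m.factorial : ℂ)) * (Hpoly m z * Hpoly m y))
      (((Real.sqrt (1 - t^2) : ℝ) : ℂ)⁻¹ *
        Complex.exp ((2*z*y*(t:ℂ) - (z^2+y^2)*(t:ℂ)^2) / (1 - (t:ℂ)^2))) := by
  have hπ : (0:ℝ) < Real.pi := Real.pi_pos
  have hsπ : Real.sqrt Real.pi ≠ 0 := by positivity
  have ht2 : (0:ℝ) < 1 - t^2 := by nlinarith
  set F : ℕ → ℝ → ℂ := fun m u =>
    (Hpoly m y * (t:ℂ)^m / (m.factorial : ℂ)) * ((z + u * I) ^ m * Complex.exp (-(u:ℂ) ^ 2))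
    with hF
  have hInt : ∀ m, Integrable (F m) := fun m => (integrable_f m z).const_mul _
  -- norm of Hpoly
  have hHnorm : ∀ (m : ℕ) (x : ℂ), ‖Hpoly m x‖ ≤
      2^m / Real.sqrt Real.pi * ∫ u : ℝ, (‖x‖+|u|)^m * Real.exp (-u^2) := by
    intro m x
    have h1 : Real.sqrt Real.pi * ‖Hpoly m x‖ = 2^m * ‖Jg m x‖ := by
      have := congrArg norm (sqrtpi_Hpoly m x)
      simpa [norm_mul, Complex.norm_real, _root_.abs_of_nonneg (Real.sqrt_nonneg Real.pi),
        norm_pow] using this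
    have h2 : ‖Jg m x‖ ≤ ∫ u : ℝ, (‖x‖+|u|)^m * Real.exp (-u^2) := by
      rw [Jg_def_eq]
      refine (norm_integral_le_integral_norm _).trans ?_
      apply integral_mono (integrable_f m x).norm (integrable_aux (norm_nonneg x) m)
      intro u
      exact norm_f_le m x u
    rw [div_mul_eq_mul_div, le_div_iff₀ (by positivity : (0:ℝ) < Real.sqrt Real.pi)]
    calc ‖Hpoly m x‖ * Real.sqrt Real.pi = Real.sqrt Real.pi * ‖Hpoly m x‖ := by ring
      _ = 2^m * ‖Jg m x‖ := h1
      _ ≤ 2^m * ∫ u : ℝ, (‖x‖+|u|)^m * Real.exp (-u^2) := by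
          apply mul_le_mul_of_nonneg_left h2 (by positivity)
  -- summability of integral norms
  have hNorm : Summable fun m => ∫ u : ℝ, ‖F m u‖ := by
    refine Summable.of_nonneg_of_le (fun m => integral_nonneg fun u => norm_nonneg _)
      (fun m => ?_)
      (((summable_bound ht0.le ht1 (norm_nonneg z) (norm_nonneg y))).mul_left
        (1 / Real.sqrt Real.pi))
    have hc : ‖Hpoly m y * (t:ℂ)^m / (m.factorial : ℂ)‖
        = ‖Hpoly m y‖ * t^m / m.factorial := by
      rw [norm_div, norm_mul, norm_pow]
      simp [Complex.norm_real, Complex.norm_natCast, _root_.abs_of_nonneg ht0.le]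
    have hpt : ∀ u : ℝ, ‖F m u‖
        ≤ (‖Hpoly m y‖ * t^m / m.factorial) * ((‖z‖+|u|)^m * Real.exp (-u^2)) := by
      intro u
      rw [hF]
      simp only []
      rw [norm_mul, hc]
      apply mul_le_mul_of_nonneg_left (norm_f_le m z u) (by positivity)
    have haA : (0:ℝ) ≤ ∫ u : ℝ, (‖z‖+|u|)^m * Real.exp (-u^2) :=
      integral_nonneg fun u => by positivity
    have haB : (0:ℝ) ≤ ∫ v : ℝ, (‖y‖+|v|)^m * Real.exp (-v^2) :=
      integral_nonneg fun v => by positivity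
    calc (∫ u : ℝ, ‖F m u‖)
        ≤ ∫ u : ℝ, (‖Hpoly m y‖ * t^m / m.factorial) * ((‖z‖+|u|)^m * Real.exp (-u^2)) := by
          apply integral_mono (hInt m).norm
            ((integrable_aux (norm_nonneg z) m).const_mul _) hpt
      _ = (‖Hpoly m y‖ * t^m / m.factorial) * ∫ u : ℝ, (‖z‖+|u|)^m * Real.exp (-u^2) :=
          integral_const_mul _ _
      _ ≤ ((2^m / Real.sqrt Real.pi * ∫ v : ℝ, (‖y‖+|v|)^m * Real.exp (-v^2)) * t^m / m.factorial)
            * ∫ u : ℝ, (‖z‖+|u|)^m * Real.exp (-u^2) := by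
          gcongr
          exact hHnorm m y
      _ = 1 / Real.sqrt Real.pi * ((2*t)^m / m.factorial *
            ((∫ u : ℝ, (‖z‖+|u|)^m * Real.exp (-u^2)) * ∫ v : ℝ, (‖y‖+|v|)^m * Real.exp (-v^2))) := by
          rw [mul_pow]
          ring
  -- the quadratic exponent
  set b : ℂ := ((t^2 - 1 : ℝ) : ℂ) with hbdef
  set c : ℂ := 2*(t:ℂ)*I*(y - (t:ℂ)*z) with hcdef
  set d : ℂ := 2*y*(t:ℂ)*z - (t:ℂ)^2*z^2 with hddef
  have hb : b.re < 0 := by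
    rw [hbdef]
    simp only [Complex.ofReal_re]
    nlinarith
  have hptsum : ∀ u : ℝ, HasSum (fun m => F m u)
      (Complex.exp (b*(u:ℂ)^2 + c*(u:ℂ) + d)) := by
    intro u
    have h := (hasSum_gen y ((t:ℂ)*(z + u*I))).mul_right (Complex.exp (-(u:ℂ)^2))
    have hfe : (fun m : ℕ => Hpoly m y * ((t:ℂ)*(z + u*I))^m / (m.factorial:ℂ) *
        Complex.exp (-(u:ℂ)^2)) = fun m => F m u := by
      funext m
      rw [hF]
      simp only [mul_pow]
      ring
    rw [hfe] at h
    have hexp : Complex.exp (2*y*((t:ℂ)*(z+u*I)) - ((t:ℂ)*(z+u*I))^2) * Complex.exp (-(u:ℂ)^2)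
        = Complex.exp (b*(u:ℂ)^2 + c*(u:ℂ) + d) := by
      rw [← Complex.exp_add]
      congr 1
      rw [hbdef, hcdef, hddef]
      push_cast
      linear_combination (-(t:ℂ)^2 * (u:ℂ)^2) * Complex.I_sq
    rw [hexp] at h
    exact h
  have hsum_int := MeasureTheory.hasSum_integral_of_summable_integral_norm hInt hNorm
  have htsum_eq : (fun u : ℝ => ∑' m, F m u)
      = fun u : ℝ => Complex.exp (b*(u:ℂ)^2 + c*(u:ℂ) + d) :=
    funext fun u => (hptsum u).tsum_eq
  rw [htsum_eq, integral_cexp_quadratic hb c d] at hsum_int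
  have final := hsum_int.mul_left (((Real.sqrt Real.pi : ℝ) : ℂ)⁻¹)
  have hsπC : ((Real.sqrt Real.pi : ℝ) : ℂ) ≠ 0 := Complex.ofReal_ne_zero.mpr hsπ
  have hterm : ∀ m : ℕ, ((Real.sqrt Real.pi : ℝ) : ℂ)⁻¹ * ∫ u : ℝ, F m u
      = (t:ℂ)^m / (2^m * (m.factorial : ℂ)) * (Hpoly m z * Hpoly m y) := by
    intro m
    have hJ : Jg m z = ((Real.sqrt Real.pi : ℝ) : ℂ) * Hpoly m z / 2^m := by
      rw [eq_div_iff (pow_ne_zero m (two_ne_zero' ℂ))]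
      linear_combination (sqrtpi_Hpoly m z).symm
    have hIeq : (∫ u : ℝ, F m u) = (Hpoly m y * (t:ℂ)^m / (m.factorial:ℂ)) * Jg m z := by
      rw [hF, Jg_def_eq]
      exact integral_const_mul _ _
    rw [hIeq, hJ]
    have hfne : ((m.factorial : ℂ)) ≠ 0 := by exact_mod_cast m.factorial_ne_zero
    field_simp
  have hval : ((Real.sqrt Real.pi : ℝ) : ℂ)⁻¹ *
      ((↑Real.pi / -b) ^ (1/2 : ℂ) * Complex.exp (d - c^2 / (4*b)))
      = ((Real.sqrt (1 - t^2) : ℝ) : ℂ)⁻¹ *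
        Complex.exp ((2*z*y*(t:ℂ) - (z^2+y^2)*(t:ℂ)^2) / (1 - (t:ℂ)^2)) := by
    have hnb : -b = ((1 - t^2 : ℝ) : ℂ) := by rw [hbdef]; push_cast; ring
    have hdiv : (↑Real.pi / -b) = ((Real.pi / (1 - t^2) : ℝ) : ℂ) := by
      rw [hnb, Complex.ofReal_div]
    have hcp : ((Real.pi / (1 - t^2) : ℝ) : ℂ) ^ (1/2 : ℂ)
        = ((Real.sqrt (Real.pi / (1 - t^2)) : ℝ) : ℂ) := by
      rw [show (1/2 : ℂ) = ((1/2 : ℝ) : ℂ) by norm_num,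
        ← Complex.ofReal_cpow (by positivity) (1/2 : ℝ)]
      rw [← Real.sqrt_eq_rpow]
    have hsq : Real.sqrt (Real.pi / (1 - t^2)) = Real.sqrt Real.pi / Real.sqrt (1 - t^2) :=
      Real.sqrt_div hπ.le _
    have hc2 : c^2 = -(4*(t:ℂ)^2*(y - (t:ℂ)*z)^2) := by
      rw [hcdef]
      linear_combination (4*(t:ℂ)^2*(y - (t:ℂ)*z)^2) * Complex.I_sq
    have htne : (1 : ℂ) - (t:ℂ)^2 ≠ 0 := by
      rw [show (1:ℂ) - (t:ℂ)^2 = ((1 - t^2 : ℝ):ℂ) by push_cast; ring]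
      exact Complex.ofReal_ne_zero.mpr ht2.ne'
    have hexp2 : d - c^2/(4*b) = (2*z*y*(t:ℂ) - (z^2+y^2)*(t:ℂ)^2) / (1 - (t:ℂ)^2) := by
      rw [hc2, hddef, hbdef]
      have : ((t^2 - 1 : ℝ) : ℂ) = (t:ℂ)^2 - 1 := by push_cast; ring
      rw [this]
      have h4 : (t:ℂ)^2 - 1 ≠ 0 := by
        intro h
        apply htne
        linear_combination -h
      field_simp
      ring
    rw [hdiv, hcp, hsq, hexp2]
    have hs1 : Real.sqrt (1 - t^2) ≠ 0 := by positivity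
    push_cast
    rw [div_eq_mul_inv]
    field_simp
  rw [funext hterm, hval] at final
  exact final

end Mehler

set_option maxHeartbeats 1000000 in
/-- The series `∑ ψ^s_m(z) conj (ψ^s_m(w))` converges to the reproducing kernel `K^s(z,w)`. -/
theorem statement3 (s : ℝ) (hs0 : 0 < s) (hs1 : s < 1) (z w : ℂ) :
    HasSum (fun m : ℕ => psiS s m z * (starRingEnd ℂ) (psiS s m w)) (Kker s z w) := by
  have hs1' : (0:ℝ) < 1 + s := by linarith
  set t : ℝ := (1 - s)/(1 + s) with htdef
  have ht0 : 0 < t := div_pos (by linarith) hs1'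
  have ht1 : t < 1 := by rw [htdef, div_lt_one hs1']; linarith
  have ht2 : (0:ℝ) < 1 - t^2 := by nlinarith
  set wb : ℂ := (starRingEnd ℂ) w with hwb
  clear_value t wb
  have h4s : 1 - t^2 = 4*s/(1+s)^2 := by
    rw [htdef]
    field_simp [hs1'.ne']
    ring
  have hM := mehler ht0 ht1 z wb
  set C : ℂ := (((1 - s) / (Real.pi * Real.sqrt s) : ℝ) : ℂ) *
    (Complex.exp (-z^2/2) * Complex.exp (-wb^2/2)) with hC
  have hss : Real.sqrt s * Real.sqrt s = s := Real.mul_self_sqrt hs0.le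
  have hsne : Real.sqrt s ≠ 0 := by positivity
  have hterm : ∀ m : ℕ, psiS s m z * (starRingEnd ℂ) (psiS s m w)
      = C * ((t:ℂ)^m / (2^m * (m.factorial:ℂ)) * (Hpoly m z * Hpoly m wb)) := by
    intro m
    rw [psiS, psiS]
    rw [map_mul, map_mul, map_mul, map_mul, Hpoly_conj, ← Complex.exp_conj]
    rw [Complex.conj_ofReal, Complex.conj_ofReal]
    rw [show (starRingEnd ℂ) (1 / (Real.sqrt ((2:ℝ)^m * m.factorial) : ℂ))
      = 1 / (Real.sqrt ((2:ℝ)^m * m.factorial) : ℂ) by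
        rw [map_div₀, map_one, Complex.conj_ofReal]]
    rw [← hwb]
    rw [show (starRingEnd ℂ) (-w^2/2) = -wb^2/2 by
      rw [map_div₀, map_neg, map_pow, map_ofNat, hwb]]
    -- now pure algebra with square roots
    have h1 : ((Real.sqrt ((1-s)/(Real.pi * Real.sqrt s)) : ℝ) : ℂ) *
        ((Real.sqrt ((1-s)/(Real.pi * Real.sqrt s)) : ℝ) : ℂ)
        = (((1-s)/(Real.pi * Real.sqrt s) : ℝ) : ℂ) := by
      rw [← Complex.ofReal_mul,
        Real.mul_self_sqrt (div_nonneg (by linarith) (by positivity))]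
    have h2 : ((Real.sqrt (((1-s)/(1+s))^m) : ℝ) : ℂ) *
        ((Real.sqrt (((1-s)/(1+s))^m) : ℝ) : ℂ) = (t:ℂ)^m := by
      rw [← Complex.ofReal_mul,
        Real.mul_self_sqrt (pow_nonneg (div_nonneg (by linarith) hs1'.le) m), htdef]
      push_cast
      ring
    have h3 : ((Real.sqrt ((2:ℝ)^m * m.factorial) : ℝ) : ℂ) *
        ((Real.sqrt ((2:ℝ)^m * m.factorial) : ℝ) : ℂ) = 2^m * (m.factorial:ℂ) := by
      rw [← Complex.ofReal_mul, Real.mul_self_sqrt (by positivity)]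
      push_cast
      ring
    have h3ne : ((Real.sqrt ((2:ℝ)^m * m.factorial) : ℝ) : ℂ) ≠ 0 := by
      rw [Complex.ofReal_ne_zero]
      positivity
    calc ((Real.sqrt ((1-s)/(Real.pi * Real.sqrt s)) : ℝ) : ℂ) *
          ((Real.sqrt (((1-s)/(1+s))^m) : ℝ) : ℂ) *
          (1 / ((Real.sqrt ((2:ℝ)^m * m.factorial) : ℝ) : ℂ)) *
          Complex.exp (-z^2/2) * Hpoly m z *
          (((Real.sqrt ((1-s)/(Real.pi * Real.sqrt s)) : ℝ) : ℂ) *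
          ((Real.sqrt (((1-s)/(1+s))^m) : ℝ) : ℂ) *
          (1 / ((Real.sqrt ((2:ℝ)^m * m.factorial) : ℝ) : ℂ)) *
          Complex.exp (-wb^2/2) * Hpoly m wb)
        = (((Real.sqrt ((1-s)/(Real.pi * Real.sqrt s)) : ℝ) : ℂ) *
            ((Real.sqrt ((1-s)/(Real.pi * Real.sqrt s)) : ℝ) : ℂ)) *
          (((Real.sqrt (((1-s)/(1+s))^m) : ℝ) : ℂ) *
            ((Real.sqrt (((1-s)/(1+s))^m) : ℝ) : ℂ)) *
          (1 / (((Real.sqrt ((2:ℝ)^m * m.factorial) : ℝ) : ℂ) *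
            ((Real.sqrt ((2:ℝ)^m * m.factorial) : ℝ) : ℂ))) *
          (Complex.exp (-z^2/2) * Complex.exp (-wb^2/2)) * (Hpoly m z * Hpoly m wb) := by
          field_simp
      _ = (((1-s)/(Real.pi * Real.sqrt s) : ℝ) : ℂ) * (t:ℂ)^m *
            (1 / (2^m * (m.factorial:ℂ))) *
          (Complex.exp (-z^2/2) * Complex.exp (-wb^2/2)) * (Hpoly m z * Hpoly m wb) := by
          rw [h1, h2, h3]
      _ = C * ((t:ℂ)^m / (2^m * (m.factorial:ℂ)) * (Hpoly m z * Hpoly m wb)) := by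
          rw [hC]
          ring
  have hs1t : Real.sqrt (1 - t^2) = 2*Real.sqrt s/(1+s) := by
    rw [show 1 - t^2 = (2*Real.sqrt s/(1+s))^2 by
      rw [div_pow, mul_pow, Real.sq_sqrt hs0.le, h4s]
      norm_num]
    exact Real.sqrt_sq (by positivity)
  have htCne : (1:ℂ) - (t:ℂ)^2 ≠ 0 := by
    rw [show (1:ℂ) - (t:ℂ)^2 = ((1 - t^2 : ℝ) : ℂ) by push_cast; ring]
    exact Complex.ofReal_ne_zero.mpr ht2.ne'
  have hval : C * (((Real.sqrt (1-t^2) : ℝ) : ℂ)⁻¹ *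
      Complex.exp ((2*z*wb*(t:ℂ) - (z^2+wb^2)*(t:ℂ)^2)/(1 - (t:ℂ)^2))) = Kker s z w := by
    rw [Kker, hC, ← hwb]
    have hconst : (((1-s)/(Real.pi*Real.sqrt s) : ℝ) : ℂ) * (((Real.sqrt (1-t^2) : ℝ)):ℂ)⁻¹
        = (((1 - s^2)/(2*Real.pi*s) : ℝ) : ℂ) := by
      rw [← Complex.ofReal_inv, ← Complex.ofReal_mul]
      congr 1
      rw [hs1t]
      rw [show (2*Real.sqrt s/(1+s))⁻¹ = (1+s)/(2*Real.sqrt s) by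
        rw [inv_div]]
      field_simp [Real.pi_ne_zero, hsne, hs1'.ne']
      linear_combination (s^2-1) * hss
    have hA : (((1+s^2)/(4*s) : ℝ) : ℂ) = 1/2 + (t:ℂ)^2/(1-(t:ℂ)^2) := by
      rw [show (1+s^2)/(4*s) = 1/2 + t^2/(1-t^2) by
        rw [h4s, htdef]
        field_simp [hs0.ne', hs1'.ne']
        ring]
      push_cast
      ring
    have hN : (((1-s^2)/(2*s) : ℝ) : ℂ) = 2*(t:ℂ)/(1-(t:ℂ)^2) := by
      rw [show (1-s^2)/(2*s) = 2*t/(1-t^2) by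
        rw [h4s, htdef]
        field_simp [hs0.ne', hs1'.ne']
        ring]
      push_cast
      ring
    have hexparg : -z^2/2 + -wb^2/2 + (2*z*wb*(t:ℂ) - (z^2+wb^2)*(t:ℂ)^2)/(1-(t:ℂ)^2)
        = -(((1+s^2)/(4*s) : ℝ) : ℂ)*(z^2 + wb^2) + (((1-s^2)/(2*s) : ℝ):ℂ)*z*wb := by
      rw [hA, hN]
      field_simp [htCne]
      ring
    calc (((1-s)/(Real.pi*Real.sqrt s) : ℝ) : ℂ) *
          (Complex.exp (-z^2/2) * Complex.exp (-wb^2/2)) *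
          (((Real.sqrt (1-t^2) : ℝ) : ℂ)⁻¹ *
            Complex.exp ((2*z*wb*(t:ℂ) - (z^2+wb^2)*(t:ℂ)^2)/(1 - (t:ℂ)^2)))
        = ((((1-s)/(Real.pi*Real.sqrt s) : ℝ) : ℂ) * (((Real.sqrt (1-t^2) : ℝ)):ℂ)⁻¹) *
          (Complex.exp (-z^2/2) * Complex.exp (-wb^2/2) *
            Complex.exp ((2*z*wb*(t:ℂ) - (z^2+wb^2)*(t:ℂ)^2)/(1 - (t:ℂ)^2))) := by ring
      _ = (((1 - s^2)/(2*Real.pi*s) : ℝ) : ℂ) *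
          Complex.exp (-z^2/2 + -wb^2/2 +
            (2*z*wb*(t:ℂ) - (z^2+wb^2)*(t:ℂ)^2)/(1 - (t:ℂ)^2)) := by
          rw [hconst, ← Complex.exp_add, ← Complex.exp_add]
      _ = (((1 - s^2)/(2*Real.pi*s) : ℝ) : ℂ) *
          Complex.exp (-(((1+s^2)/(4*s) : ℝ) : ℂ)*(z^2 + wb^2) + (((1-s^2)/(2*s) : ℝ):ℂ)*z*wb) := by
          rw [hexparg]
  have final := hM.mul_left C
  rw [funext hterm, ← hval]
  exact final
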